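/- Let N be an integral (cancellative) commutative monoid, let M₁, M₂ ⊂ N be finitely generated submonoids, and for i = 1,2 let X_i ⊂ N be a finitely generated M_i-module (i.e., a subset with M_i + X_i ⊂ X_i generated by finitely many elements under the M_i-action). Then M₁ ∩ M₂ is a finitely generated monoid and X₁ ∩ X₂ is a finitely generated (M₁ ∩ M₂)-module. -/

import Mathlib

open AddSubmonoid

lemma natPi_isPWO {ι : Type} [Finite ι] (s : Set (ι → ℕ)) : s.IsPWO :=
  (Set.IsPWO.pi (s := fun _ => (Set.univ : Set ℕ)) (fun _ => Set.isPWO_of_wellQuasiOrderedLE _)).mono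
    (by simp)

/-- Dickson package: every subset of `ι → ℕ` (`ι` finite) has a finite set of minimal
elements, each element lying above a minimal one. -/
lemma dickson_min {ι : Type} [Fintype ι] (T : Set (ι → ℕ)) :
    ∃ E : Finset (ι → ℕ), ↑E ⊆ T ∧
      ∀ u ∈ T, ∃ e ∈ E, e ≤ u ∧ ∀ t ∈ T, t ≤ e → t = e := by
  classical
  set Min : Set (ι → ℕ) := {e | e ∈ T ∧ ∀ t ∈ T, t ≤ e → t = e} with hMin
  have hfin : Min.Finite := by
    by_contra h
    obtain f := (Set.Infinite.natEmbedding Min h)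
    obtain ⟨i, j, hij, hle⟩ := (natPi_isPWO Min).exists_lt (f := fun n => (f n : ι → ℕ)) (fun n => (f n).2)
    exact absurd (f.injective (Subtype.ext (((f j).2).2 (f i) ((f i).2).1 hle))) hij.ne
  refine ⟨hfin.toFinset, fun x hx => (hfin.mem_toFinset.mp hx).1, ?_⟩
  intro u hu
  have hWF : Set.IsWF {t | t ∈ T ∧ t ≤ u} := (natPi_isPWO _).isWF
  have hne : {t | t ∈ T ∧ t ≤ u}.Nonempty := ⟨u, hu, le_refl u⟩
  set e := hWF.min hne with he
  have hem := hWF.min_mem hne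
  have hmin : ∀ t ∈ T, t ≤ e → t = e := by
    intro t ht hte
    by_contra hne'
    exact hWF.not_lt_min hne ⟨ht, hte.trans hem.2⟩ (lt_of_le_of_ne hte hne')
  exact ⟨e, hfin.mem_toFinset.mpr ⟨hem.1, hmin⟩, hem.2, hmin⟩

lemma pi_sub_add {ι : Type} {e u : ι → ℕ} (h : e ≤ u) : u = e + (u - e) := by
  funext i
  have hle : e i ≤ u i := h i
  simp only [Pi.add_apply, Pi.sub_apply]
  omega

/-- Solutions of the homogeneous equation `f u = g u` form a finitely generated submonoid. -/
lemma homog_fg {ι : Type} [Fintype ι] {N : Type} [AddCancelCommMonoid N]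
    (f g : (ι → ℕ) →+ N) :
    ∃ V : Finset (ι → ℕ), (∀ v ∈ V, f v = g v) ∧
      ∀ u, f u = g u → u ∈ AddSubmonoid.closure (V : Set (ι → ℕ)) := by
  obtain ⟨V, hVT, hVmin⟩ := dickson_min {u : ι → ℕ | u ≠ 0 ∧ f u = g u}
  refine ⟨V, fun v hv => (hVT hv).2, ?_⟩
  suffices H : ∀ n u, (∑ i, u i) = n → f u = g u → u ∈ AddSubmonoid.closure (V : Set (ι → ℕ)) from
    fun u hu => H _ u rfl hu
  intro n
  induction n using Nat.strong_induction_on with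
  | _ n ih =>
    intro u hsum hu
    by_cases h0 : u = 0
    · subst h0; exact zero_mem _
    · obtain ⟨e, heV, heu, -⟩ := hVmin u ⟨h0, hu⟩
      obtain ⟨he0, hefg⟩ : e ≠ 0 ∧ f e = g e := hVT heV
      obtain ⟨w, huw⟩ : ∃ w, u = e + w := ⟨u - e, pi_sub_add heu⟩
      have hfw : f w = g w := by
        have h1 : f e + f w = f e + g w := by
          rw [← map_add, ← huw, hu, hefg, huw, map_add]
        exact add_left_cancel h1
      have hwsum : ∑ i, w i < n := by
        subst hsum
        obtain ⟨i0, hi0⟩ := Function.ne_iff.mp he0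
        have hwu : ∀ i, w i ≤ u i := fun i => by
          have : u i = e i + w i := congrFun huw i
          omega
        refine Finset.sum_lt_sum (fun i _ => hwu i) ⟨i0, Finset.mem_univ _, ?_⟩
        have h1 : u i0 = e i0 + w i0 := congrFun huw i0
        have h2 : e i0 ≠ 0 := hi0
        omega
      exact huw ▸ add_mem (subset_closure heV) (ih _ hwsum w rfl hfw)

/-- Solutions of the inhomogeneous equation `f u + c = g u + c'` form a finitely generated
module over the homogeneous solution monoid. -/
lemma inhomog_fg {ι : Type} [Fintype ι] {N : Type} [AddCancelCommMonoid N]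
    (f g : (ι → ℕ) →+ N) (c c' : N) :
    ∃ E : Finset (ι → ℕ), (∀ e ∈ E, f e + c = g e + c') ∧
      ∀ u, f u + c = g u + c' → ∃ e ∈ E, ∃ s, f s = g s ∧ u = e + s := by
  obtain ⟨E, hET, hEmin⟩ := dickson_min {u : ι → ℕ | f u + c = g u + c'}
  refine ⟨E, fun e he => hET he, fun u hu => ?_⟩
  obtain ⟨e, heE, heu, -⟩ := hEmin u hu
  have hec : f e + c = g e + c' := hET heE
  obtain ⟨w, huw⟩ : ∃ w, u = e + w := ⟨u - e, pi_sub_add heu⟩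
  refine ⟨e, heE, w, ?_, huw⟩
  have h1 : (f e + c) + f w = (f e + c) + g w := by
    calc (f e + c) + f w = (f e + f w) + c := by abel
    _ = f u + c := by rw [← map_add, ← huw]
    _ = g u + c' := hu
    _ = (g e + g w) + c' := by rw [huw, map_add]
    _ = (g e + c') + g w := by abel
    _ = (f e + c) + g w := by rw [hec]
  exact add_left_cancel h1

lemma mem_closure_finset_rep {N : Type} [AddCommMonoid N] {s : Finset N} {m : N}
    (h : m ∈ closure (s : Set N)) : ∃ u : ↥s → ℕ, ∑ x : ↥s, u x • (x : N) = m := by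
  rw [← Submodule.span_nat_eq_addSubmonoidClosure, Submodule.mem_toAddSubmonoid] at h
  obtain ⟨c, hc⟩ := Submodule.mem_span_finset.mp h
  exact ⟨fun x => c ↑x, by rw [Finset.sum_coe_sort s (fun i => c i • i), hc.2]⟩

theorem inter_fg_monoid_module {N : Type} [AddCancelCommMonoid N]
    (M₁ M₂ : AddSubmonoid N) (h₁ : M₁.FG) (h₂ : M₂.FG)
    (X₁ X₂ : Set N)
    (hX₁mod : ∀ m ∈ M₁, ∀ x ∈ X₁, m + x ∈ X₁)
    (hX₂mod : ∀ m ∈ M₂, ∀ x ∈ X₂, m + x ∈ X₂)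
    (hX₁fg : ∃ F : Finset N, ↑F ⊆ X₁ ∧ X₁ = {y | ∃ m ∈ M₁, ∃ x ∈ F, y = m + x})
    (hX₂fg : ∃ F : Finset N, ↑F ⊆ X₂ ∧ X₂ = {y | ∃ m ∈ M₂, ∃ x ∈ F, y = m + x}) :
    (M₁ ⊓ M₂).FG ∧
    (∀ m ∈ M₁ ⊓ M₂, ∀ x ∈ X₁ ∩ X₂, m + x ∈ X₁ ∩ X₂) ∧
    ∃ F : Finset N, ↑F ⊆ X₁ ∩ X₂ ∧
      X₁ ∩ X₂ = {y | ∃ m ∈ M₁ ⊓ M₂, ∃ x ∈ F, y = m + x} := by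
  classical
  obtain ⟨s₁, hs₁⟩ := h₁
  obtain ⟨s₂, hs₂⟩ := h₂
  obtain ⟨F₁, hF₁X, hF₁⟩ := hX₁fg
  obtain ⟨F₂, hF₂X, hF₂⟩ := hX₂fg
  set F : ((↥s₁ ⊕ ↥s₂) → ℕ) →+ N :=
    { toFun := fun u => ∑ x : ↥s₁, u (Sum.inl x) • (x : N),
      map_zero' := by simp,
      map_add' := fun a b => by simp [add_smul, Finset.sum_add_distrib] } with hFdef
  set G : ((↥s₁ ⊕ ↥s₂) → ℕ) →+ N :=
    { toFun := fun u => ∑ x : ↥s₂, u (Sum.inr x) • (x : N),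
      map_zero' := by simp,
      map_add' := fun a b => by simp [add_smul, Finset.sum_add_distrib] } with hGdef
  have hFmem : ∀ u, F u ∈ M₁ := fun u => by
    rw [← hs₁]
    exact sum_mem _ fun x _ => nsmul_mem (subset_closure x.2) _
  have hGmem : ∀ u, G u ∈ M₂ := fun u => by
    rw [← hs₂]
    exact sum_mem _ fun x _ => nsmul_mem (subset_closure x.2) _
  have hsurj : ∀ m₁ ∈ M₁, ∀ m₂ ∈ M₂, ∃ u, F u = m₁ ∧ G u = m₂ := by
    intro m₁ hm₁ m₂ hm₂
    obtain ⟨a, ha⟩ := mem_closure_finset_rep (hs₁ ▸ hm₁)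
    obtain ⟨b, hb⟩ := mem_closure_finset_rep (hs₂ ▸ hm₂)
    exact ⟨Sum.elim a b, by simpa [hFdef] using ha, by simpa [hGdef] using hb⟩
  obtain ⟨V, hVfg, hVrep⟩ := homog_fg F G
  constructor
  · -- M₁ ⊓ M₂ is finitely generated
    refine ⟨V.image F, le_antisymm (closure_le.mpr ?_) ?_⟩
    · intro y hy
      obtain ⟨v, hv, rfl⟩ := Finset.mem_coe.mp hy |> Finset.mem_image.mp
      exact ⟨hFmem v, hVfg v hv ▸ hGmem v⟩
    · intro m hm
      obtain ⟨u, hFu, hGu⟩ := hsurj m hm.1 m hm.2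
      have hu : u ∈ AddSubmonoid.closure (V : Set _) := hVrep u (by rw [hFu, hGu])
      have : F u ∈ (AddSubmonoid.closure (V : Set _)).map F := ⟨u, hu, rfl⟩
      rw [AddMonoidHom.map_mclosure, ← Finset.coe_image] at this
      exact hFu ▸ this
  constructor
  · -- module property
    rintro m ⟨hm₁, hm₂⟩ x ⟨hx₁, hx₂⟩
    exact ⟨hX₁mod m hm₁ x hx₁, hX₂mod m hm₂ x hx₂⟩
  · -- the module X₁ ∩ X₂ is finitely generated
    have hEx : ∀ c c' : N, ∃ E : Finset ((↥s₁ ⊕ ↥s₂) → ℕ),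
        (∀ e ∈ E, F e + c = G e + c') ∧
        ∀ u, F u + c = G u + c' → ∃ e ∈ E, ∃ s, F s = G s ∧ u = e + s :=
      fun c c' => inhomog_fg F G c c'
    choose E hE1 hE2 using hEx
    refine ⟨(F₁ ×ˢ F₂).biUnion (fun p => (E p.1 p.2).image (fun e => F e + p.1)), ?_, ?_⟩
    · -- generators lie in X₁ ∩ X₂
      intro y hy
      obtain ⟨p, hp, hy⟩ := Finset.mem_biUnion.mp hy
      obtain ⟨e, he, rfl⟩ := Finset.mem_image.mp hy
      obtain ⟨hp1, hp2⟩ := Finset.mem_product.mp hp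
      refine ⟨hX₁mod _ (hFmem e) _ (hF₁X hp1), ?_⟩
      rw [hE1 p.1 p.2 e he]
      exact hX₂mod _ (hGmem e) _ (hF₂X hp2)
    · ext y
      constructor
      · rintro ⟨hy₁, hy₂⟩
        obtain ⟨m₁, hm₁, x₁, hx₁, rfl⟩ := hF₁ ▸ hy₁
        obtain ⟨m₂, hm₂, x₂, hx₂, heq⟩ := hF₂ ▸ hy₂
        obtain ⟨u, hFu, hGu⟩ := hsurj m₁ hm₁ m₂ hm₂
        have : F u + x₁ = G u + x₂ := by rw [hFu, hGu]; exact heq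
        obtain ⟨e, he, s, hs, rfl⟩ := hE2 x₁ x₂ u this
        refine ⟨F s, ⟨hFmem s, hs ▸ hGmem s⟩, F e + x₁,
          Finset.mem_biUnion.mpr ⟨(x₁, x₂), Finset.mem_product.mpr ⟨hx₁, hx₂⟩,
            Finset.mem_image.mpr ⟨e, he, rfl⟩⟩, ?_⟩
        rw [← hFu, map_add]
        abel
      · rintro ⟨m, ⟨hm₁, hm₂⟩, x, hx, rfl⟩
        obtain ⟨p, hp, hx'⟩ := Finset.mem_biUnion.mp hx
        obtain ⟨e, he, rfl⟩ := Finset.mem_image.mp hx'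
        obtain ⟨hp1, hp2⟩ := Finset.mem_product.mp hp
        have hxX₁ : F e + p.1 ∈ X₁ := hX₁mod _ (hFmem e) _ (hF₁X hp1)
        have hxX₂ : F e + p.1 ∈ X₂ := by
          rw [hE1 p.1 p.2 e he]
          exact hX₂mod _ (hGmem e) _ (hF₂X hp2)
        exact ⟨hX₁mod m hm₁ _ hxX₁, hX₂mod m hm₂ _ hxX₂⟩
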